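/- Define q(x,t) = 2e^{3x+9t} / (1 + 6e^{x+5t} + 3e^{2x+8t}) and r(x,t) = e^{−2x−4t}(1 + 2e^{x+3t} + 3e^{2x+8t}) / (1 + 4e^{x+5t} + e^{2x+8t}). Then q satisfies the PDE ∂_t q = ∂_x² q + 2 q (∂_x q) r for all real x, t. -/

import Mathlib

open Real

noncomputable def q (x t : ℝ) : ℝ :=
  2 * exp (3 * x + 9 * t) / (1 + 6 * exp (x + 5 * t) + 3 * exp (2 * x + 8 * t))

noncomputable def r (x t : ℝ) : ℝ :=
  exp (-2 * x - 4 * t) * (1 + 2 * exp (x + 3 * t) + 3 * exp (2 * x + 8 * t))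
    / (1 + 4 * exp (x + 5 * t) + exp (2 * x + 8 * t))

/-- derivative of `exp (a*y + b)` in `y` -/
private lemma hExp (a b y : ℝ) :
    HasDerivAt (fun y : ℝ => exp (a * y + b)) (exp (a * y + b) * a) y := by
  have h : HasDerivAt (fun y : ℝ => a * y + b) a y := by
    simpa using ((hasDerivAt_id y).const_mul a).add_const b
  exact h.exp

theorem stmt4 (x t : ℝ) :
    deriv (fun s => q x s) t
      = iteratedDeriv 2 (fun y => q y t) x
        + 2 * q x t * deriv (fun y => q y t) x * r x t := by
  have hpos : ∀ y s : ℝ, (0:ℝ) < 1 + 6 * exp (y + 5 * s) + 3 * exp (2 * y + 8 * s) := by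
    intro y s; positivity
  -- t-derivative
  have hNt : HasDerivAt (fun s : ℝ => 2 * exp (3 * x + 9 * s))
      (2 * (exp (3 * x + 9 * t) * 9)) t := by
    have := hExp 9 (3 * x) t
    simp only [show ∀ s : ℝ, 9 * s + 3 * x = 3 * x + 9 * s from fun s => by ring] at this
    exact this.const_mul 2
  have hDt : HasDerivAt (fun s : ℝ => 1 + 6 * exp (x + 5 * s) + 3 * exp (2 * x + 8 * s))
      (6 * (exp (x + 5 * t) * 5) + 3 * (exp (2 * x + 8 * t) * 8)) t := by
    have h1 := hExp 5 x t
    simp only [show ∀ s : ℝ, 5 * s + x = x + 5 * s from fun s => by ring] at h1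
    have h2 := hExp 8 (2 * x) t
    simp only [show ∀ s : ℝ, 8 * s + 2 * x = 2 * x + 8 * s from fun s => by ring] at h2
    simpa [Pi.add_def] using ((h1.const_mul 6).const_add 1).add (h2.const_mul 3)
  have hqt : HasDerivAt (fun s => q x s)
      ((2 * (exp (3 * x + 9 * t) * 9) * (1 + 6 * exp (x + 5 * t) + 3 * exp (2 * x + 8 * t))
        - 2 * exp (3 * x + 9 * t) * (6 * (exp (x + 5 * t) * 5) + 3 * (exp (2 * x + 8 * t) * 8)))
        / (1 + 6 * exp (x + 5 * t) + 3 * exp (2 * x + 8 * t)) ^ 2) t := by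
    simpa only [q, Pi.div_def] using hNt.div hDt (ne_of_gt (hpos x t))
  -- x-derivative (as a function)
  have hqx : ∀ y : ℝ, HasDerivAt (fun y => q y t)
      ((2 * (exp (3 * y + 9 * t) * 3) * (1 + 6 * exp (y + 5 * t) + 3 * exp (2 * y + 8 * t))
        - 2 * exp (3 * y + 9 * t) * (6 * (exp (y + 5 * t) * 1) + 3 * (exp (2 * y + 8 * t) * 2)))
        / (1 + 6 * exp (y + 5 * t) + 3 * exp (2 * y + 8 * t)) ^ 2) y := by
    intro y
    have hN : HasDerivAt (fun y : ℝ => 2 * exp (3 * y + 9 * t))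
        (2 * (exp (3 * y + 9 * t) * 3)) y := (hExp 3 (9 * t) y).const_mul 2
    have hD : HasDerivAt (fun y : ℝ => 1 + 6 * exp (y + 5 * t) + 3 * exp (2 * y + 8 * t))
        (6 * (exp (y + 5 * t) * 1) + 3 * (exp (2 * y + 8 * t) * 2)) y := by
      have h1 := hExp 1 (5 * t) y
      simp only [one_mul] at h1
      simpa [Pi.add_def] using ((h1.const_mul 6).const_add 1).add ((hExp 2 (8 * t) y).const_mul 3)
    simpa only [q, Pi.div_def] using hN.div hD (ne_of_gt (hpos y t))
  have hderivfun : (deriv fun y => q y t)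
      = fun y => (2 * (exp (3 * y + 9 * t) * 3) * (1 + 6 * exp (y + 5 * t) + 3 * exp (2 * y + 8 * t))
        - 2 * exp (3 * y + 9 * t) * (6 * (exp (y + 5 * t) * 1) + 3 * (exp (2 * y + 8 * t) * 2)))
        / (1 + 6 * exp (y + 5 * t) + 3 * exp (2 * y + 8 * t)) ^ 2 :=
    funext fun y => (hqx y).deriv
  -- second x-derivative
  have hqxx : HasDerivAt (fun y => (2 * (exp (3 * y + 9 * t) * 3) * (1 + 6 * exp (y + 5 * t) + 3 * exp (2 * y + 8 * t))
        - 2 * exp (3 * y + 9 * t) * (6 * (exp (y + 5 * t) * 1) + 3 * (exp (2 * y + 8 * t) * 2)))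
        / (1 + 6 * exp (y + 5 * t) + 3 * exp (2 * y + 8 * t)) ^ 2)
      (((2 * (exp (3 * x + 9 * t) * 3) * 3 * (1 + 6 * exp (x + 5 * t) + 3 * exp (2 * x + 8 * t))
          + 2 * (exp (3 * x + 9 * t) * 3) * (6 * (exp (x + 5 * t) * 1) + 3 * (exp (2 * x + 8 * t) * 2))
        - (2 * (exp (3 * x + 9 * t) * 3) * (6 * (exp (x + 5 * t) * 1) + 3 * (exp (2 * x + 8 * t) * 2))
          + 2 * exp (3 * x + 9 * t) * (6 * (exp (x + 5 * t) * 1) + 3 * (exp (2 * x + 8 * t) * 2 * 2))))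
        * (1 + 6 * exp (x + 5 * t) + 3 * exp (2 * x + 8 * t)) ^ 2
        - (2 * (exp (3 * x + 9 * t) * 3) * (1 + 6 * exp (x + 5 * t) + 3 * exp (2 * x + 8 * t))
          - 2 * exp (3 * x + 9 * t) * (6 * (exp (x + 5 * t) * 1) + 3 * (exp (2 * x + 8 * t) * 2)))
          * (2 * (1 + 6 * exp (x + 5 * t) + 3 * exp (2 * x + 8 * t))
            * (6 * (exp (x + 5 * t) * 1) + 3 * (exp (2 * x + 8 * t) * 2))))
        / ((1 + 6 * exp (x + 5 * t) + 3 * exp (2 * x + 8 * t)) ^ 2) ^ 2) x := by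
    have hA : HasDerivAt (fun y : ℝ => exp (3 * y + 9 * t)) (exp (3 * x + 9 * t) * 3) x :=
      hExp 3 (9 * t) x
    have hB : HasDerivAt (fun y : ℝ => exp (y + 5 * t)) (exp (x + 5 * t) * 1) x := by
      simpa using hExp 1 (5 * t) x
    have hC : HasDerivAt (fun y : ℝ => exp (2 * y + 8 * t)) (exp (2 * x + 8 * t) * 2) x :=
      hExp 2 (8 * t) x
    have hD : HasDerivAt (fun y : ℝ => 1 + 6 * exp (y + 5 * t) + 3 * exp (2 * y + 8 * t))
        (6 * (exp (x + 5 * t) * 1) + 3 * (exp (2 * x + 8 * t) * 2)) x := by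
      simpa [Pi.add_def] using ((hB.const_mul 6).const_add 1).add (hC.const_mul 3)
    have hD' : HasDerivAt (fun y : ℝ => 6 * (exp (y + 5 * t) * 1) + 3 * (exp (2 * y + 8 * t) * 2))
        (6 * (exp (x + 5 * t) * 1) + 3 * (exp (2 * x + 8 * t) * 2 * 2)) x := by
      have hB1 : HasDerivAt (fun y : ℝ => exp (y + 5 * t) * 1) (exp (x + 5 * t) * 1) x := by
        simpa using hB
      have hC2 : HasDerivAt (fun y : ℝ => exp (2 * y + 8 * t) * 2) (exp (2 * x + 8 * t) * 2 * 2) x :=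
        hC.mul_const 2
      exact (hB1.const_mul 6).add (hC2.const_mul 3)
    have hNum : HasDerivAt (fun y : ℝ =>
        2 * (exp (3 * y + 9 * t) * 3) * (1 + 6 * exp (y + 5 * t) + 3 * exp (2 * y + 8 * t))
          - 2 * exp (3 * y + 9 * t) * (6 * (exp (y + 5 * t) * 1) + 3 * (exp (2 * y + 8 * t) * 2)))
        (2 * (exp (3 * x + 9 * t) * 3) * 3 * (1 + 6 * exp (x + 5 * t) + 3 * exp (2 * x + 8 * t))
          + 2 * (exp (3 * x + 9 * t) * 3) * (6 * (exp (x + 5 * t) * 1) + 3 * (exp (2 * x + 8 * t) * 2))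
        - (2 * (exp (3 * x + 9 * t) * 3) * (6 * (exp (x + 5 * t) * 1) + 3 * (exp (2 * x + 8 * t) * 2))
          + 2 * exp (3 * x + 9 * t) * (6 * (exp (x + 5 * t) * 1) + 3 * (exp (2 * x + 8 * t) * 2 * 2)))) x := by
      have h1 : HasDerivAt (fun y : ℝ => 2 * (exp (3 * y + 9 * t) * 3))
          (2 * (exp (3 * x + 9 * t) * 3 * 3)) x := (hA.mul_const 3).const_mul 2
      have h1' : HasDerivAt (fun y : ℝ => 2 * (exp (3 * y + 9 * t) * 3))
          (2 * (exp (3 * x + 9 * t) * 3) * 3) x := by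
        convert h1 using 1; ring
      have h2 : HasDerivAt (fun y : ℝ => 2 * exp (3 * y + 9 * t))
          (2 * (exp (3 * x + 9 * t) * 3)) x := hA.const_mul 2
      exact (h1'.mul hD).sub (h2.mul hD')
    have hDsq : HasDerivAt (fun y : ℝ => (1 + 6 * exp (y + 5 * t) + 3 * exp (2 * y + 8 * t)) ^ 2)
        (2 * (1 + 6 * exp (x + 5 * t) + 3 * exp (2 * x + 8 * t))
          * (6 * (exp (x + 5 * t) * 1) + 3 * (exp (2 * x + 8 * t) * 2))) x := by
      have : HasDerivAt (fun y : ℝ => (1 + 6 * exp (y + 5 * t) + 3 * exp (2 * y + 8 * t)) ^ 2)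
          (((2 : ℕ) : ℝ) * (1 + 6 * exp (x + 5 * t) + 3 * exp (2 * x + 8 * t)) ^ (2 - 1)
            * (6 * (exp (x + 5 * t) * 1) + 3 * (exp (2 * x + 8 * t) * 2))) x := hD.fun_pow 2
      convert this using 1; ring
    exact hNum.div hDsq (by positivity)
  have h2 : iteratedDeriv 2 (fun y => q y t) x
      = ((2 * (exp (3 * x + 9 * t) * 3) * 3 * (1 + 6 * exp (x + 5 * t) + 3 * exp (2 * x + 8 * t))
          + 2 * (exp (3 * x + 9 * t) * 3) * (6 * (exp (x + 5 * t) * 1) + 3 * (exp (2 * x + 8 * t) * 2))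
        - (2 * (exp (3 * x + 9 * t) * 3) * (6 * (exp (x + 5 * t) * 1) + 3 * (exp (2 * x + 8 * t) * 2))
          + 2 * exp (3 * x + 9 * t) * (6 * (exp (x + 5 * t) * 1) + 3 * (exp (2 * x + 8 * t) * 2 * 2))))
        * (1 + 6 * exp (x + 5 * t) + 3 * exp (2 * x + 8 * t)) ^ 2
        - (2 * (exp (3 * x + 9 * t) * 3) * (1 + 6 * exp (x + 5 * t) + 3 * exp (2 * x + 8 * t))
          - 2 * exp (3 * x + 9 * t) * (6 * (exp (x + 5 * t) * 1) + 3 * (exp (2 * x + 8 * t) * 2)))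
          * (2 * (1 + 6 * exp (x + 5 * t) + 3 * exp (2 * x + 8 * t))
            * (6 * (exp (x + 5 * t) * 1) + 3 * (exp (2 * x + 8 * t) * 2))))
        / ((1 + 6 * exp (x + 5 * t) + 3 * exp (2 * x + 8 * t)) ^ 2) ^ 2 := by
    rw [iteratedDeriv_succ, iteratedDeriv_one, hderivfun]
    exact hqxx.deriv
  rw [hqt.deriv, h2, (hqx x).deriv, q, r]
  -- rewrite all exponentials in terms of u = exp (x + 3t), w = exp (2t)
  have hu : (0:ℝ) < exp (x + 3 * t) := exp_pos _
  have hw : (0:ℝ) < exp (2 * t) := exp_pos _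
  have e1 : exp (x + 5 * t) = exp (x + 3 * t) * exp (2 * t) := by
    rw [← exp_add]; ring_nf
  have e2 : exp (2 * x + 8 * t) = exp (x + 3 * t) * exp (x + 3 * t) * exp (2 * t) := by
    rw [← exp_add, ← exp_add]; ring_nf
  have e3 : exp (3 * x + 9 * t) = exp (x + 3 * t) * exp (x + 3 * t) * exp (x + 3 * t) := by
    rw [← exp_add, ← exp_add]; ring_nf
  have e4 : exp (-2 * x - 4 * t) = exp (2 * t) / (exp (x + 3 * t) * exp (x + 3 * t)) := by
    rw [eq_div_iff (by positivity), ← exp_add, ← exp_add]; ring_nf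
  rw [e1, e2, e3, e4]
  set u := exp (x + 3 * t)
  set w := exp (2 * t)
  have d1 : (0:ℝ) < 1 + 6 * (u * w) + 3 * (u * u * w) := by positivity
  have d2 : (0:ℝ) < 1 + 4 * (u * w) + u * u * w := by positivity
  field_simp
  ring
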